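/- Let F be a field of characteristic zero, fix a monomial ordering ≺ on F[x_1,...,x_d], and suppose {P_1,...,P_n} ⊂ F[x_1,...,x_d] is a "reverse" reduced basis with respect to ≺. Then T = {lm(P_1), lm(P_2), ..., lm(P_n)} is a set of n distinct monomials and is a monomial interpolating basis for the interpolation conditions Δ = δ_0 ∘ {P_1(D),...,P_n(D)}: for every (f_1,...,f_n) ∈ F^n there exists a unique g in the F-linear span of T with (P_i(D)g)(0) = f_i for all i. -/
import Mathlib


open MvPolynomial

/-- The iterated partial derivative operator `D^α = ∂^{α_1}_{x_1} ⋯ ∂^{α_d}_{x_d}`. -/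
noncomputable def Dmon (F : Type*) [CommSemiring F] {d : ℕ} (α : Fin d →₀ ℕ) :
    Module.End F (MvPolynomial (Fin d) F) :=
  ((List.finRange d).map fun i =>
    ((pderiv i : Derivation F (MvPolynomial (Fin d) F) (MvPolynomial (Fin d) F)) :
      MvPolynomial (Fin d) F →ₗ[F] MvPolynomial (Fin d) F) ^ (α i)).prod

/-- The differential operator `P(D) = Σ_α P̂(α) D^α` induced by a polynomial `P`. -/
noncomputable def PD {F : Type*} [Field F] {d : ℕ} (P : MvPolynomial (Fin d) F) :
    Module.End F (MvPolynomial (Fin d) F) :=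
  ∑ α ∈ P.support, P.coeff α • Dmon F α

/-- The linear functional `δ₀ ∘ P(D) : g ↦ (P(D) g)(0)`. -/
noncomputable def delta0PD {F : Type*} [Field F] {d : ℕ} (P : MvPolynomial (Fin d) F) :
    MvPolynomial (Fin d) F →ₗ[F] F :=
  (MvPolynomial.aeval (0 : Fin d → F)).toLinearMap ∘ₗ PD P

/-- `prec` is a monomial ordering: a linear well-ordering of the monomials (identified with
their exponent vectors) that is compatible with multiplication of monomials. -/
structure IsMonomialOrder {d : ℕ} (prec : (Fin d →₀ ℕ) → (Fin d →₀ ℕ) → Prop) : Prop where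
  irrefl : ∀ a, ¬ prec a a
  trans : ∀ a b c, prec a b → prec b c → prec a c
  total : ∀ a b, a ≠ b → prec a b ∨ prec b a
  wf : WellFounded prec
  add_compat : ∀ a b c, prec a b → prec (a + c) (b + c)

/-- `m` is the `prec`-least monomial occurring in `P` with nonzero coefficient,
i.e. `X^m = lm(P)`. -/
def IsLeastMon {F : Type*} [Field F] {d : ℕ} (prec : (Fin d →₀ ℕ) → (Fin d →₀ ℕ) → Prop)
    (P : MvPolynomial (Fin d) F) (m : Fin d →₀ ℕ) : Prop :=
  m ∈ P.support ∧ ∀ m' ∈ P.support, m' ≠ m → prec m m'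

/-- `{P_1, ..., P_n}` is a "reverse" reduced basis w.r.t. `prec`: the `P_i` are linearly
independent and `lm(P_i) ∉ Λ{P_j}` for all `i < j`. -/
def IsRevReducedBasis {F : Type*} [Field F] {d n : ℕ}
    (prec : (Fin d →₀ ℕ) → (Fin d →₀ ℕ) → Prop) (P : Fin n → MvPolynomial (Fin d) F) : Prop :=
  LinearIndependent F P ∧
    ∀ i j : Fin n, i < j → ∀ m, IsLeastMon prec (P i) m → m ∉ (P j).support


lemma pderiv_pow_monomial {F : Type*} [Field F] {d : ℕ} (i : Fin d) (k : ℕ)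
    (γ : Fin d →₀ ℕ) (c : F) :
    ((((pderiv i : Derivation F (MvPolynomial (Fin d) F) (MvPolynomial (Fin d) F)) :
      MvPolynomial (Fin d) F →ₗ[F] MvPolynomial (Fin d) F)) ^ k) (monomial γ c) =
      monomial (γ - Finsupp.single i k) (c * ((γ i).descFactorial k : ℕ)) := by
  induction k with
  | zero => simp
  | succ k ih =>
    rw [pow_succ', Module.End.mul_apply, ih]
    simp only [Derivation.coeFn_coe, pderiv_monomial]
    rw [tsub_tsub, ← Finsupp.single_add]
    congr 1
    have h1 : (γ - Finsupp.single i k) i = γ i - k := by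
      simp [Finsupp.tsub_apply]
    rw [h1, Nat.descFactorial_succ]
    push_cast
    ring

lemma sum_single_apply_notmem {d : ℕ} (α : Fin d →₀ ℕ) (l : List (Fin d)) (i : Fin d)
    (h : i ∉ l) : ((l.map fun j => Finsupp.single j (α j)).sum) i = 0 := by
  induction l with
  | nil => simp
  | cons j l ihl =>
    simp only [List.mem_cons, not_or] at h
    rw [List.map_cons, List.sum_cons, Finsupp.add_apply, ihl h.2,
      Finsupp.single_apply, if_neg (Ne.symm h.1)]

lemma list_prod_pderiv_monomial {F : Type*} [Field F] {d : ℕ} (α : Fin d →₀ ℕ)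
    (l : List (Fin d)) (hl : l.Nodup) (γ : Fin d →₀ ℕ) (c : F) :
    ((l.map fun i =>
      ((pderiv i : Derivation F (MvPolynomial (Fin d) F) (MvPolynomial (Fin d) F)) :
        MvPolynomial (Fin d) F →ₗ[F] MvPolynomial (Fin d) F) ^ (α i)).prod) (monomial γ c) =
      monomial (γ - (l.map fun i => Finsupp.single i (α i)).sum)
        (c * ((l.map fun i => (γ i).descFactorial (α i)).prod : ℕ)) := by
  induction l with
  | nil => simp
  | cons i l ih =>
    rw [List.nodup_cons] at hl
    rw [List.map_cons, List.prod_cons, Module.End.mul_apply, ih hl.2,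
      pderiv_pow_monomial]
    have h1 : (γ - (l.map fun j => Finsupp.single j (α j)).sum) i = γ i := by
      simp [Finsupp.tsub_apply, sum_single_apply_notmem α l i hl.1]
    rw [h1, List.map_cons, List.sum_cons, List.map_cons, List.prod_cons,
      tsub_tsub, add_comm ((l.map fun j => Finsupp.single j (α j)).sum)]
    congr 1
    push_cast
    ring

lemma Dmon_monomial {F : Type*} [Field F] {d : ℕ} (α γ : Fin d →₀ ℕ) (c : F) :
    Dmon F α (monomial γ c) =
      monomial (γ - α) (c * ((∏ i, (γ i).descFactorial (α i) : ℕ) : F)) := by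
  rw [Dmon, list_prod_pderiv_monomial α _ (List.nodup_finRange d)]
  have hsum : ((List.finRange d).map fun i => Finsupp.single i (α i)).sum = α := by
    rw [← Fin.sum_univ_def]
    ext j
    simp [Finsupp.single_apply]
  rw [hsum, ← Fin.prod_univ_def]

lemma delta0PD_monomial {F : Type*} [Field F] {d : ℕ} (P : MvPolynomial (Fin d) F)
    (γ : Fin d →₀ ℕ) :
    delta0PD P (monomial γ (1 : F)) = ((∏ i, Nat.factorial (γ i) : ℕ) : F) * P.coeff γ := by
  rw [delta0PD, LinearMap.comp_apply, PD, LinearMap.coe_sum, Finset.sum_apply, map_sum]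
  have : ∀ α ∈ P.support,
      (MvPolynomial.aeval (0 : Fin d → F)).toLinearMap ((P.coeff α • Dmon F α) (monomial γ 1))
        = if α = γ then ((∏ i, Nat.factorial (γ i) : ℕ) : F) * P.coeff γ else 0 := by
    intro α hα
    rw [LinearMap.smul_apply, Dmon_monomial, map_smul]
    simp only [AlgHom.toLinearMap_apply, aeval_zero, one_mul]
    by_cases hαγ : α = γ
    · subst hαγ
      simp [Nat.descFactorial_self, mul_comm]
    · rw [if_neg hαγ]
      by_cases hz : γ - α = 0
      · have : ∃ i, γ i < α i := by
          by_contra h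
          push_neg at h
          apply hαγ
          ext i
          have h1 : γ i - α i = 0 := by
            have := congrFun (congrArg (↑·) hz) i
            simpa [Finsupp.tsub_apply] using this
          have h2 := h i
          omega
        obtain ⟨i, hi⟩ := this
        have : (∏ i, (γ i).descFactorial (α i)) = 0 :=
          Finset.prod_eq_zero (Finset.mem_univ i) (Nat.descFactorial_eq_zero_iff_lt.2 hi)
        simp [this]
      · simp [constantCoeff_monomial, hz]
  rw [Finset.sum_congr rfl this]
  by_cases hγ : γ ∈ P.support
  · rw [Finset.sum_ite_eq' P.support γ, if_pos hγ]
  · rw [Finset.sum_ite_eq' P.support γ, if_neg hγ]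
    rw [MvPolynomial.notMem_support_iff.1 hγ, mul_zero]

/-- If `{P_1, ..., P_n}` is a "reverse" reduced basis w.r.t. `≺` and
`X^{β_i} = lm(P_i)`, then `T = {lm(P_1), ..., lm(P_n)}` consists of `n` distinct monomials and
is a monomial interpolating basis for `Δ = δ₀ ∘ {P_1(D), ..., P_n(D)}`: for every `f ∈ F^n`
there is a unique `g` in the span of `T` with `(P_i(D) g)(0) = f_i` for all `i`. -/
theorem revReducedBasis_leastMon_isMonIntBasis {F : Type*} [Field F] [CharZero F] {d n : ℕ}
    (prec : (Fin d →₀ ℕ) → (Fin d →₀ ℕ) → Prop) (hord : IsMonomialOrder prec)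
    (P : Fin n → MvPolynomial (Fin d) F) (hP : IsRevReducedBasis prec P)
    (β : Fin n → (Fin d →₀ ℕ)) (hβ : ∀ i, IsLeastMon prec (P i) (β i)) :
    Function.Injective β ∧
    ∀ f : Fin n → F, ∃! g : MvPolynomial (Fin d) F,
      g ∈ Submodule.span F (Set.range fun j => (monomial (β j) (1 : F) : MvPolynomial (Fin d) F))
        ∧ ∀ i, delta0PD (P i) g = f i := by
  have hnot : ∀ i j : Fin n, i < j → β i ∉ (P j).support := fun i j hij =>
    hP.2 i j hij (β i) (hβ i)
  constructor
  · intro i j hij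
    by_contra hne
    rcases lt_or_gt_of_ne hne with h | h
    · exact hnot i j h (hij ▸ (hβ j).1)
    · exact hnot j i h (hij ▸ (hβ i).1)
  intro f
  set M : Matrix (Fin n) (Fin n) F :=
    fun i j => delta0PD (P i) (monomial (β j) 1) with hM
  have hMval : ∀ i j, M i j = ((∏ k, Nat.factorial (β j k) : ℕ) : F) * (P i).coeff (β j) :=
    fun i j => delta0PD_monomial _ _
  have htri : M.BlockTriangular id := by
    intro i j hij
    rw [hMval, MvPolynomial.notMem_support_iff.1 (hnot j i hij), mul_zero]
  have hdiag : ∀ i, M i i ≠ 0 := by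
    intro i
    rw [hMval]
    refine mul_ne_zero ?_ (MvPolynomial.mem_support_iff.1 (hβ i).1)
    exact_mod_cast Finset.prod_ne_zero_iff.2 fun k _ => Nat.factorial_ne_zero _
  have hdet : IsUnit M.det := by
    rw [Matrix.det_of_upperTriangular htri]
    exact (Finset.prod_ne_zero_iff.2 fun i _ => hdiag i).isUnit
  have heval : ∀ (c : Fin n → F) (i : Fin n),
      delta0PD (P i) (∑ j, c j • monomial (β j) (1 : F)) = M.mulVec c i := by
    intro c i
    rw [map_sum, Matrix.mulVec]
    simp only [map_smul, smul_eq_mul, dotProduct]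
    exact Finset.sum_congr rfl fun j _ => mul_comm _ _
  set c : Fin n → F := M⁻¹.mulVec f with hc
  refine ⟨∑ j, c j • monomial (β j) (1 : F), ⟨?_, ?_⟩, ?_⟩
  · exact Submodule.sum_mem _ fun j _ => Submodule.smul_mem _ _
      (Submodule.subset_span (Set.mem_range_self j))
  · intro i
    rw [heval, hc, Matrix.mulVec_mulVec, Matrix.mul_nonsing_inv _ hdet, Matrix.one_mulVec]
  · rintro g' ⟨hg'mem, hg'cond⟩
    obtain ⟨c', hc'⟩ := (Submodule.mem_span_range_iff_exists_fun F).1 hg'mem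
    have hMc' : M.mulVec c' = f := by
      ext i
      rw [← hg'cond i, ← hc', heval]
    have : c' = c := by
      rw [hc, ← hMc', Matrix.mulVec_mulVec, Matrix.nonsing_inv_mul _ hdet, Matrix.one_mulVec]
    rw [← hc', this]
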